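/- Let σ be a prefix normal word chain generator of length n, j ∈ [n−1] with σ(j) > σ(j+1), and let σ' be obtained from σ by swapping positions j and j+1. Then σ' is a prefix normal word chain generator if and only if there is no factor v of w = c_σ[j] such that: v contains position σ(j) but not position σ(j+1) of w, σ(j+1) ≤ |v| < σ(j), and the number of 1s in v equals the number of 1s in the prefix of w of length |v|. -/

import Mathlib

/-- A binary word (list of booleans, `true` = letter 1) is prefix normal if every
factor has at most as many 1s as the prefix of the same length. -/
def prefixNormal (w : List Bool) : Prop :=
  ∀ v : List Bool, v <:+: w → v.count true ≤ (w.take v.length).count true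

/-- The word chain of a permutation σ of positions (0-indexed): `pnChain σ 0 = 1^n`
and `pnChain σ (k+1)` flips position `σ k` of `pnChain σ k` from 1 to 0.
(`pnChain σ k` corresponds to the paper's `c_σ[k+1]`.) -/
def pnChain {n : ℕ} (σ : Equiv.Perm (Fin n)) : ℕ → List Bool
  | 0 => List.replicate n true
  | k + 1 => if h : k < n then (pnChain σ k).set (σ ⟨k, h⟩) false else pnChain σ k

/-- σ is a prefix normal word chain generator iff every word of its chain is prefix normal. -/
def isPNGen {n : ℕ} (σ : Equiv.Perm (Fin n)) : Prop :=
  ∀ k ≤ n, prefixNormal (pnChain σ k)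

namespace PNAux

lemma take_set_of_le (w : List Bool) (p L : ℕ) (x : Bool) (h : L ≤ p) :
    (w.set p x).take L = w.take L := by
  rw [List.take_set]
  apply List.set_eq_of_length_le
  simp; omega

lemma count_take_set (w : List Bool) (p L : ℕ) (hp : p < w.length) (hv : w[p] = true)
    (hL : p < L) :
    ((w.set p false).take L).count true + 1 = (w.take L).count true := by
  rw [List.take_set]
  have hpt : p < (w.take L).length := by simp; omega
  have htv : (w.take L)[p] = true := by rw [List.getElem_take]; exact hv
  have hpos : 0 < (w.take L).count true :=
    List.count_pos_iff.mpr (htv ▸ List.getElem_mem hpt)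
  rw [List.count_set hpt]
  simp [htv]
  omega

lemma drop_take_set_out (w : List Bool) (p s L : ℕ) (x : Bool) (h : p < s ∨ s + L ≤ p) :
    ((w.set p x).drop s).take L = (w.drop s).take L := by
  rw [List.drop_set]
  rcases h with h | h
  · rw [if_pos h]
  · rw [if_neg (by omega)]
    exact take_set_of_le _ _ _ _ (by omega)

lemma count_window_set_in (w : List Bool) (p s L : ℕ) (hp : p < w.length)
    (hv : w[p] = true) (h1 : s ≤ p) (h2 : p < s + L) :
    (((w.set p false).drop s).take L).count true + 1 = ((w.drop s).take L).count true := by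
  obtain ⟨q, rfl⟩ : ∃ q, p = s + q := ⟨p - s, by omega⟩
  rw [List.drop_set, if_neg (by omega)]
  have hq : s + q - s = q := by omega
  rw [hq]
  have hlen : q < (w.drop s).length := by simp; omega
  have hvq : (w.drop s)[q] = true := by rw [List.getElem_drop]; exact hv
  exact count_take_set _ _ _ hlen hvq (by omega)

lemma window_infix (w : List Bool) (s L : ℕ) : (w.drop s).take L <:+: w :=
  (List.take_prefix L _).isInfix.trans (List.drop_suffix s w).isInfix

lemma eq_window_of_split (u₁ v u₂ : List Bool) :
    v = ((u₁ ++ v ++ u₂).drop u₁.length).take v.length ∧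
      u₁.length + v.length ≤ (u₁ ++ v ++ u₂).length := by
  constructor
  · rw [List.append_assoc, List.drop_left, List.take_left]
  · simp

lemma split_of_window (w : List Bool) (s L : ℕ) (h : s + L ≤ w.length) :
    w = w.take s ++ (w.drop s).take L ++ w.drop (s + L) ∧
      (w.take s).length = s ∧ ((w.drop s).take L).length = L := by
  refine ⟨?_, by simp; omega, by simp; omega⟩
  rw [List.append_assoc]
  have h1 : (w.drop s).take L ++ (w.drop s).drop L = w.drop s := List.take_append_drop _ _
  rw [List.drop_drop] at h1
  rw [h1, List.take_append_drop]

lemma key (w : List Bool) (a b : ℕ) (hab : b < a) (ha : a < w.length)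
    (hwa : w[a] = true) (hwb : w[b]'(by omega) = true)
    (h0 : prefixNormal w) (h1 : prefixNormal (w.set a false))
    (h2 : prefixNormal ((w.set a false).set b false)) :
    prefixNormal (w.set b false) ↔
      ¬ ∃ s L, s + L ≤ w.length ∧ (s ≤ a ∧ a < s + L) ∧ ¬(s ≤ b ∧ b < s + L) ∧
        (b + 1 ≤ L ∧ L ≤ a) ∧ ((w.drop s).take L).count true = (w.take L).count true := by
  clear h1
  constructor
  · intro hpn
    rintro ⟨s, L, hsL, ⟨hsa, haL⟩, hbout, ⟨hbL, hLa⟩, hcount⟩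
    have hbo : b < s ∨ s + L ≤ b := by omega
    have heq := drop_take_set_out w b s L false hbo
    have hlen : (((w.set b false).drop s).take L).length = L := by simp; omega
    have h := hpn _ (window_infix (w.set b false) s L)
    rw [hlen, heq] at h
    have hpref := count_take_set w b L (by omega) hwb (by omega)
    omega
  · intro hbad v hv
    by_contra hviol
    push_neg at hviol
    obtain ⟨u₁, u₂, hsplit⟩ := hv
    obtain ⟨hveq, hle⟩ := eq_window_of_split u₁ v u₂
    rw [hsplit] at hveq hle
    rw [List.length_set] at hle
    have hvc : v.count true = (((w.set b false).drop u₁.length).take v.length).count true := by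
      conv_lhs => rw [hveq]
    apply hbad
    have hlenw : ((w.drop u₁.length).take v.length).length = v.length := by simp; omega
    have hCP := h0 _ (window_infix w u₁.length v.length)
    rw [hlenw] at hCP
    have hbL : b < v.length := by
      by_contra hc
      push_neg at hc
      have hpr : (w.set b false).take v.length = w.take v.length :=
        take_set_of_le w b v.length false hc
      rw [hpr] at hviol
      by_cases hbin : b < u₁.length ∨ u₁.length + v.length ≤ b
      · have hw := drop_take_set_out w b u₁.length v.length false hbin
        rw [hw] at hvc
        omega
      · have hw := count_window_set_in w b u₁.length v.length (by omega) hwb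
          (by omega) (by omega)
        omega
    have hprefL := count_take_set w b v.length (by omega) hwb hbL
    have hbin : ¬ (u₁.length ≤ b ∧ b < u₁.length + v.length) := by
      rintro ⟨hb1, hb2⟩
      have hw := count_window_set_in w b u₁.length v.length (by omega) hwb hb1 hb2
      omega
    have hwineq : (((w.set b false).drop u₁.length).take v.length)
        = ((w.drop u₁.length).take v.length) :=
      drop_take_set_out w b u₁.length v.length false (by omega)
    rw [hwineq] at hvc
    have hCeqP : ((w.drop u₁.length).take v.length).count true
        = (w.take v.length).count true := by omega
    have hcomm : (w.set a false).set b false = (w.set b false).set a false :=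
      List.set_comm _ _ (by omega)
    have hub : (w.set a false)[b]'(by simp; omega) = true := by
      rw [List.getElem_set, if_neg (by omega)]; exact hwb
    have hlen2 : ((((w.set a false).set b false).drop u₁.length).take v.length).length
        = v.length := by simp; omega
    have h2' := h2 _ (window_infix ((w.set a false).set b false) u₁.length v.length)
    rw [hlen2] at h2'
    have hpu := count_take_set (w.set a false) b v.length (by simp; omega) hub hbL
    by_cases hain : u₁.length ≤ a ∧ a < u₁.length + v.length
    · have hLa : v.length ≤ a := by
        by_contra hc
        push_neg at hc
        have hpua := count_take_set w a v.length (by omega) hwa hc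
        have hw'a : (w.set b false)[a]'(by simp; omega) = true := by
          rw [List.getElem_set, if_neg (by omega)]; exact hwa
        have hwin'' := count_window_set_in (w.set b false) a u₁.length v.length
          (by simp; omega) hw'a hain.1 hain.2
        rw [← hcomm, hwineq] at hwin''
        omega
      exact ⟨u₁.length, v.length, by omega, hain, hbin, ⟨by omega, hLa⟩, hCeqP⟩
    · exfalso
      have hwa'' : ((((w.set a false).set b false).drop u₁.length).take v.length)
          = (((w.set b false).drop u₁.length).take v.length) := by
        rw [hcomm]
        exact drop_take_set_out (w.set b false) a u₁.length v.length false (by omega)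
      rw [hwa'', hwineq] at h2'
      have hPu : ((w.set a false).take v.length).count true
          ≤ (w.take v.length).count true := by
        by_cases hc : a < v.length
        · have := count_take_set w a v.length (by omega) hwa hc
          omega
        · rw [take_set_of_le w a v.length false (by omega)]
      omega

lemma pnChain_length {n : ℕ} (σ : Equiv.Perm (Fin n)) (k : ℕ) :
    (pnChain σ k).length = n := by
  induction k with
  | zero => simp [pnChain]
  | succ k ih => simp only [pnChain]; split <;> simp [ih]

lemma pnChain_get? {n : ℕ} (σ : Equiv.Perm (Fin n)) (k : ℕ) (i : Fin n) (hk : k ≤ i.val) :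
    (pnChain σ k)[(σ i : ℕ)]? = some true := by
  induction k with
  | zero =>
    show (List.replicate n true)[(σ i : ℕ)]? = some true
    rw [List.getElem?_replicate, if_pos (σ i).isLt]
  | succ k ih =>
    have hkn : k < n := by omega
    simp only [pnChain]
    rw [dif_pos hkn]
    have hne : ((σ ⟨k, hkn⟩ : Fin n) : ℕ) ≠ ((σ i : Fin n) : ℕ) := by
      intro he
      have h' : (⟨k, hkn⟩ : Fin n) = i := σ.injective (Fin.val_injective he)
      have := congrArg Fin.val h'
      simp at this
      omega
    rw [List.getElem?_set_ne hne]
    exact ih (by omega)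

lemma pnChain_getElem {n : ℕ} (σ : Equiv.Perm (Fin n)) (k : ℕ) (i : Fin n) (hk : k ≤ i.val)
    (h : (σ i : ℕ) < (pnChain σ k).length) :
    (pnChain σ k)[(σ i : ℕ)] = true := by
  have h1 := pnChain_get? σ k i hk
  rw [List.getElem?_eq_getElem h] at h1
  exact Option.some.inj h1

lemma pnChain_congr {n : ℕ} (σ τ : Equiv.Perm (Fin n)) (k : ℕ)
    (h : ∀ m (hm : m < n), m < k → σ ⟨m, hm⟩ = τ ⟨m, hm⟩) :
    pnChain σ k = pnChain τ k := by
  induction k with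
  | zero => rfl
  | succ k ih =>
    have hk := ih (fun m hm hmk => h m hm (by omega))
    simp only [pnChain]
    split
    · rename_i hkn
      rw [hk, h k hkn (by omega)]
    · exact hk

lemma pnChain_add_congr {n : ℕ} (σ τ : Equiv.Perm (Fin n)) (m : ℕ)
    (hbase : pnChain σ m = pnChain τ m)
    (h : ∀ i (hi : i < n), m ≤ i → σ ⟨i, hi⟩ = τ ⟨i, hi⟩) :
    ∀ k, pnChain σ (m + k) = pnChain τ (m + k) := by
  intro k
  induction k with
  | zero => exact hbase
  | succ k ih =>
    show pnChain σ ((m + k) + 1) = pnChain τ ((m + k) + 1)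
    simp only [pnChain]
    split
    · rename_i hkn
      rw [ih, h (m + k) hkn (by omega)]
    · exact ih

end PNAux

open PNAux
/-- Swapping adjacent entries with the larger one first: the swapped sequence is a
prefix normal generator iff no factor `v` of `w = c_σ[j]` exists that contains
position `σ(j)` but not position `σ(j+1)`, has `σ(j+1) ≤ |v| < σ(j)` (1-indexed),
and has as many 1s as the prefix of `w` of length `|v|`. -/
theorem pnGen_swap_gt {n : ℕ} (σ : Equiv.Perm (Fin n)) (hσ : isPNGen σ)
    (j : ℕ) (hj : j + 1 < n)
    (hgt : σ ⟨j + 1, hj⟩ < σ ⟨j, by omega⟩) :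
    isPNGen (σ * Equiv.swap ⟨j, by omega⟩ ⟨j + 1, hj⟩) ↔
      ¬ ∃ u₁ v u₂ : List Bool,
        pnChain σ j = u₁ ++ v ++ u₂ ∧
        (u₁.length ≤ (σ ⟨j, by omega⟩ : ℕ) ∧
          (σ ⟨j, by omega⟩ : ℕ) < u₁.length + v.length) ∧
        ¬ (u₁.length ≤ (σ ⟨j + 1, hj⟩ : ℕ) ∧
          (σ ⟨j + 1, hj⟩ : ℕ) < u₁.length + v.length) ∧
        ((σ ⟨j + 1, hj⟩ : ℕ) + 1 ≤ v.length ∧ v.length < (σ ⟨j, by omega⟩ : ℕ) + 1) ∧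
        v.count true = ((pnChain σ j).take v.length).count true := by
  have hjn : j < n := by omega
  have hab : ((σ ⟨j + 1, hj⟩ : Fin n) : ℕ) < ((σ ⟨j, hjn⟩ : Fin n) : ℕ) := hgt
  set a := ((σ ⟨j, hjn⟩ : Fin n) : ℕ) with hA
  set b := ((σ ⟨j + 1, hj⟩ : Fin n) : ℕ) with hB0
  set σ' := σ * Equiv.swap (⟨j, hjn⟩ : Fin n) ⟨j + 1, hj⟩ with hS
  set W := pnChain σ j with hW
  -- basic facts about W
  have hWlen : W.length = n := pnChain_length σ j
  have ha : a < W.length := by rw [hWlen]; exact (σ _).isLt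
  have hWa : W[a]'ha = true := pnChain_getElem σ j ⟨j, hjn⟩ le_rfl ha
  have hbW : b < W.length := by omega
  have hWb : W[b]'hbW = true := pnChain_getElem σ j ⟨j + 1, hj⟩ (Nat.le_succ j) hbW
  -- unfoldings of the chain
  have hc1 : pnChain σ (j + 1) = W.set a false := by
    simp only [pnChain]
    rw [dif_pos hjn, ← hW, ← hA]
  have hc2 : pnChain σ (j + 2) = (W.set a false).set b false := by
    show pnChain σ ((j + 1) + 1) = _
    simp only [pnChain]
    rw [dif_pos hj, dif_pos hjn, ← hW, ← hA, ← hB0]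
  -- values of σ'
  have hs'j : σ' ⟨j, hjn⟩ = σ ⟨j + 1, hj⟩ := by
    rw [hS, Equiv.Perm.mul_apply, Equiv.swap_apply_left]
  have hs'j1 : σ' ⟨j + 1, hj⟩ = σ ⟨j, hjn⟩ := by
    rw [hS, Equiv.Perm.mul_apply, Equiv.swap_apply_right]
  have hs'other : ∀ m (hm : m < n), m ≠ j → m ≠ j + 1 → σ' ⟨m, hm⟩ = σ ⟨m, hm⟩ := by
    intro m hm h1 h2
    rw [hS, Equiv.Perm.mul_apply, Equiv.swap_apply_of_ne_of_ne]
    · intro he; exact h1 (congrArg Fin.val he)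
    · intro he; exact h2 (congrArg Fin.val he)
  -- chain comparisons
  have hAj : pnChain σ' j = W := by
    rw [hW]
    exact pnChain_congr σ' σ j (fun m hm hmj => hs'other m hm (by omega) (by omega))
  have hB : pnChain σ' (j + 1) = W.set b false := by
    simp only [pnChain]
    rw [dif_pos hjn, hAj, hs'j, ← hB0]
  have hC : pnChain σ' (j + 2) = pnChain σ (j + 2) := by
    have e1 : pnChain σ' (j + 2) = (W.set b false).set a false := by
      show pnChain σ' ((j + 1) + 1) = _
      simp only [pnChain]
      rw [dif_pos hj, dif_pos hjn, hAj, hs'j, hs'j1, ← hA, ← hB0]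
    rw [e1, hc2, List.set_comm _ _ (show b ≠ a by omega)]
  have hD : ∀ k, pnChain σ' (j + 2 + k) = pnChain σ (j + 2 + k) :=
    pnChain_add_congr σ' σ (j + 2) hC (fun i hi hge => hs'other i hi (by omega) (by omega))
  -- reduce isPNGen σ' to prefix normality of W.set b false
  have hiff1 : isPNGen σ' ↔ prefixNormal (W.set b false) := by
    constructor
    · intro h
      have := h (j + 1) (by omega)
      rwa [hB] at this
    · intro h k hk
      rcases Nat.lt_or_ge k (j + 1) with hk' | hk'
      · rw [pnChain_congr σ' σ k (fun m hm hmk => hs'other m hm (by omega) (by omega))]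
        exact hσ k hk
      rcases Nat.eq_or_lt_of_le hk' with he | hk''
      · rw [← he, hB]; exact h
      · obtain ⟨d, rfl⟩ : ∃ d, k = j + 2 + d := ⟨k - (j + 2), by omega⟩
        rw [hD d]
        exact hσ _ hk
  -- the key equivalence
  have h1 := hσ (j + 1) (by omega)
  rw [hc1] at h1
  have h2 := hσ (j + 2) (by omega)
  rw [hc2] at h2
  have hkey := key W a b hab ha hWa hWb (hσ j (by omega)) h1 h2
  rw [hiff1, hkey]
  -- translate the existential forms
  apply not_congr
  constructor
  · rintro ⟨s, L, hsL, h2', h3, h4, h5⟩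
    obtain ⟨hsplit, hl1, hl2⟩ := split_of_window W s L hsL
    refine ⟨W.take s, (W.drop s).take L, W.drop (s + L), hsplit, ?_, ?_, ?_, ?_⟩
    · rw [hl1, hl2]; exact h2'
    · rw [hl1, hl2]; exact h3
    · rw [hl2]; omega
    · rw [hl2]; exact h5
  · rintro ⟨u₁, v, u₂, hsplit, h2', h3, h4, h5⟩
    obtain ⟨hveq, hle⟩ := eq_window_of_split u₁ v u₂
    rw [← hsplit] at hveq hle
    refine ⟨u₁.length, v.length, hle, h2', h3, ⟨h4.1, by omega⟩, ?_⟩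
    rw [← hveq]
    exact h5
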